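/- For the free Laplacian $-\Delta_G$ on a graph $G$ consisting of a finite connected graph $K$ with $N$ discrete half-lines attached, every generalized zero eigenfunction that decays at infinity along all rays (i.e. tends to $0$ along each $L_\alpha$) is identically zero: the bound eigenspace $\mathsf{E}$ at threshold $0$ is trivial. -/

import Mathlib

open Filter Finset

/-- The graph Laplacian `-Δ_G` on the graph `G = K ∪ L₁ ∪ ⋯ ∪ L_N` obtained by attaching
`N` discrete half-lines to a finite graph `K` at the vertices `x α`; `Sum.inr (α, n)`
denotes the `(n+1)`-st vertex of the ray `L_α`. -/
noncomputable def graphLap {K : Type*} [Fintype K] [DecidableEq K] (G : SimpleGraph K)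
    [DecidableRel G.Adj] {N : ℕ} (x : Fin N → K) (u : K ⊕ Fin N × ℕ → ℂ) :
    K ⊕ Fin N × ℕ → ℂ
  | Sum.inl k =>
      (∑ k' ∈ Finset.univ.filter (G.Adj k), (u (Sum.inl k) - u (Sum.inl k'))) +
        ∑ α : Fin N, if x α = k then u (Sum.inl k) - u (Sum.inr (α, 0)) else 0
  | Sum.inr (α, 0) => 2 * u (Sum.inr (α, 0)) - u (Sum.inr (α, 1)) - u (Sum.inl (x α))
  | Sum.inr (α, n + 1) =>
      2 * u (Sum.inr (α, n + 1)) - u (Sum.inr (α, n + 2)) - u (Sum.inr (α, n))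

/-- For the free Laplacian on a connected finite graph with attached half-lines, every
generalized zero eigenfunction decaying to `0` along each ray vanishes identically:
the bound eigenspace at the threshold `0` is trivial. -/
theorem graphLap_no_bound_states
    {K : Type*} [Fintype K] [DecidableEq K] (G : SimpleGraph K) [DecidableRel G.Adj]
    (hconn : G.Connected) {N : ℕ} (hN : 1 ≤ N) (x : Fin N → K) :
    ∀ u : K ⊕ Fin N × ℕ → ℂ, (∀ p, graphLap G x u p = 0) →
      (∀ α : Fin N, Tendsto (fun n : ℕ => u (Sum.inr (α, n))) atTop (nhds 0)) →
      u = 0 := by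
  intro u hu htend
  -- Step 1: rays vanish
  have hray : ∀ α n, u (Sum.inr (α, n)) = 0 := by
    intro α
    set a : ℕ → ℂ := fun n => u (Sum.inr (α, n)) with ha
    have hrec : ∀ n, a (n + 2) = 2 * a (n + 1) - a n := by
      intro n
      have h := hu (Sum.inr (α, n + 1))
      simp only [graphLap] at h
      linear_combination -h
    have hdiff : ∀ n, a (n + 1) - a n = a 1 - a 0 := by
      intro n
      induction n with
      | zero => rfl
      | succ n ih => rw [hrec n]; linear_combination ih
    have htend' : Tendsto a atTop (nhds 0) := htend α
    have hd0 : a 1 - a 0 = 0 := by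
      have h1 : Tendsto (fun n => a (n + 1) - a n) atTop (nhds 0) := by
        simpa using ((htend'.comp (tendsto_add_atTop_nat 1)).sub htend')
      have h1' : Tendsto (fun _ : ℕ => a 1 - a 0) atTop (nhds 0) :=
        h1.congr fun n => (hdiff n)
      exact (tendsto_nhds_unique h1' tendsto_const_nhds).symm
    have hconst : ∀ n, a n = a 0 := by
      intro n
      induction n with
      | zero => rfl
      | succ n ih => linear_combination hdiff n + ih + hd0
    have ha0 : a 0 = 0 := by
      have h2 : Tendsto (fun _ : ℕ => a 0) atTop (nhds 0) :=
        htend'.congr fun n => (hconst n)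
      exact (tendsto_nhds_unique h2 tendsto_const_nhds).symm
    intro n; show a n = 0; rw [hconst n, ha0]
  set v : K → ℂ := fun k => u (Sum.inl k) with hv
  have hvx : ∀ α, v (x α) = 0 := by
    intro α
    have h := hu (Sum.inr (α, 0))
    simp only [graphLap, hray] at h
    linear_combination -h
  have hK : ∀ k, (∑ k' ∈ Finset.univ.filter (G.Adj k), (v k - v k')) +
      (∑ α : Fin N, if x α = k then v k else 0) = 0 := by
    intro k
    have h := hu (Sum.inl k)
    simp only [graphLap, hray, sub_zero] at h
    exact h
  -- Energy argument
  set T : ℂ := ∑ p : K × K, (if G.Adj p.1 p.2 then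
      (starRingEnd ℂ) (v p.1) * (v p.1 - v p.2) else 0) with hT
  have hTsum : T = ∑ k, (starRingEnd ℂ) (v k) *
      (∑ k' ∈ Finset.univ.filter (G.Adj k), (v k - v k')) := by
    rw [hT, Fintype.sum_prod_type]
    refine Finset.sum_congr rfl fun k _ => ?_
    rw [Finset.mul_sum, Finset.sum_filter]
  have hSsum : (∑ k, (starRingEnd ℂ) (v k) * (∑ α : Fin N, if x α = k then v k else 0))
      = ∑ α : Fin N, (Complex.normSq (v (x α)) : ℂ) := by
    have hh : ∀ k, (starRingEnd ℂ) (v k) * (∑ α : Fin N, if x α = k then v k else 0)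
        = ∑ α : Fin N, if x α = k then (Complex.normSq (v k) : ℂ) else 0 := by
      intro k
      rw [Finset.mul_sum]
      refine Finset.sum_congr rfl fun α _ => ?_
      split_ifs <;> simp [Complex.normSq_eq_conj_mul_self]
    rw [Finset.sum_congr rfl fun k _ => hh k, Finset.sum_comm]
    refine Finset.sum_congr rfl fun α _ => ?_
    simp
  have hTS : T + ∑ α : Fin N, (Complex.normSq (v (x α)) : ℂ) = 0 := by
    rw [hTsum, ← hSsum, ← Finset.sum_add_distrib]
    refine Finset.sum_eq_zero fun k _ => ?_
    rw [← mul_add, hK k, mul_zero]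
  have hswap : T = ∑ p : K × K, (if G.Adj p.1 p.2 then
      (starRingEnd ℂ) (v p.2) * (v p.2 - v p.1) else 0) := by
    rw [hT]
    refine Fintype.sum_equiv (Equiv.prodComm K K) _ _ ?_
    intro p
    simp only [Equiv.prodComm_apply, Prod.fst_swap, Prod.snd_swap]
    by_cases h : G.Adj p.1 p.2
    · rw [if_pos h]; exact (if_pos h.symm).symm
    · rw [if_neg h]; exact (if_neg fun h' : G.Adj p.2 p.1 => h h'.symm).symm
  have h2T : T + T = ∑ p : K × K, (if G.Adj p.1 p.2 then
      ((Complex.normSq (v p.1 - v p.2) : ℂ)) else 0) := by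
    calc T + T = (∑ p : K × K, (if G.Adj p.1 p.2 then
          (starRingEnd ℂ) (v p.1) * (v p.1 - v p.2) else 0))
        + ∑ p : K × K, (if G.Adj p.1 p.2 then
          (starRingEnd ℂ) (v p.2) * (v p.2 - v p.1) else 0) := by rw [← hT, ← hswap]
      _ = _ := by
        rw [← Finset.sum_add_distrib]
        refine Finset.sum_congr rfl fun p _ => ?_
        split_ifs
        · rw [Complex.normSq_eq_conj_mul_self, map_sub]
          ring
        · rw [add_zero]
  -- real equation
  have hreal : (∑ p : K × K, (if G.Adj p.1 p.2 then Complex.normSq (v p.1 - v p.2) else 0))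
      + 2 * (∑ α : Fin N, Complex.normSq (v (x α))) = 0 := by
    have hc : ((∑ p : K × K, (if G.Adj p.1 p.2 then Complex.normSq (v p.1 - v p.2) else 0))
        + 2 * (∑ α : Fin N, Complex.normSq (v (x α))) : ℂ) = 0 := by
      push_cast
      simp only [apply_ite (Complex.ofReal), Complex.ofReal_zero]
      rw [show (∑ p : K × K, (if G.Adj p.1 p.2 then ((Complex.normSq (v p.1 - v p.2) : ℂ)) else 0))
          = T + T from h2T.symm]
      linear_combination 2 * hTS
    exact_mod_cast hc
  have hF : ∀ p : K × K, (if G.Adj p.1 p.2 then Complex.normSq (v p.1 - v p.2) else 0) = 0 := by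
    have hFn : ∀ p : K × K, 0 ≤ (if G.Adj p.1 p.2 then Complex.normSq (v p.1 - v p.2) else 0) := by
      intro p; split_ifs; exacts [Complex.normSq_nonneg _, le_refl 0]
    have hSn : (0:ℝ) ≤ ∑ α : Fin N, Complex.normSq (v (x α)) :=
      Finset.sum_nonneg fun α _ => Complex.normSq_nonneg _
    have hFz : (∑ p : K × K, (if G.Adj p.1 p.2 then Complex.normSq (v p.1 - v p.2) else 0)) = 0 := by
      have h1 : (0:ℝ) ≤ ∑ p : K × K, (if G.Adj p.1 p.2 then Complex.normSq (v p.1 - v p.2) else 0) :=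
        Finset.sum_nonneg fun p _ => hFn p
      linarith
    intro p
    exact (Finset.sum_eq_zero_iff_of_nonneg (fun p _ => hFn p)).mp hFz p (Finset.mem_univ p)
  have hadj : ∀ k k' : K, G.Adj k k' → v k = v k' := by
    intro k k' h
    have := hF (k, k')
    rw [if_pos h] at this
    exact sub_eq_zero.mp (Complex.normSq_eq_zero.mp this)
  have hwalk : ∀ a b : K, G.Reachable a b → v a = v b := by
    intro a b hab
    obtain ⟨w⟩ := hab
    induction w with
    | nil => rfl
    | cons h p ih => exact (hadj _ _ h).trans ih
  have hvz : ∀ k, v k = 0 := by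
    intro k
    have := hwalk (x ⟨0, hN⟩) k (hconn (x ⟨0, hN⟩) k)
    rw [← this, hvx]
  funext p
  cases p with
  | inl k => exact hvz k
  | inr q => exact hray q.1 q.2
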